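/- (A posteriori error estimate for unsteady reduced basis models, time-invariant case.) Let A ∈ ℝ^{N×N}, V ∈ ℝ^{N×n}, T > 0, and C₁ ≥ 0 be such that ‖exp(s A)‖₂ ≤ C₁ for all s ∈ [0,T]. Let f : [0,T] → ℝ^N be continuous, let u : [0,T] → ℝ^N satisfy u′(t) = A u(t) + f(t) for all t ∈ [0,T], and let u_n : [0,T] → ℝⁿ be continuously differentiable. Define the residual r(t) := A V u_n(t) + f(t) − V u_n′(t). Then for every t ∈ [0,T], ‖u(t) − V u_n(t)‖₂ ≤ C₁ ( ‖u(0) − V u_n(0)‖₂ + ∫₀ᵗ ‖r(τ)‖₂ dτ ). -/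

import Mathlib

set_option maxHeartbeats 1000000

open Matrix
open scoped Matrix.Norms.L2Operator

/-- Multiplication of a real matrix with a Euclidean vector, valued in Euclidean space
(so that `‖·‖` is the Euclidean 2-norm). -/
noncomputable def mulVecE {m n : ℕ} (A : Matrix (Fin m) (Fin n) ℝ)
    (x : EuclideanSpace ℝ (Fin n)) : EuclideanSpace ℝ (Fin m) :=
  Matrix.toEuclideanLin A x

noncomputable def mulCLM {m n : ℕ} (A : Matrix (Fin m) (Fin n) ℝ) :
    EuclideanSpace ℝ (Fin n) →L[ℝ] EuclideanSpace ℝ (Fin m) :=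
  (Matrix.toEuclideanLin.trans LinearMap.toContinuousLinearMap) A

lemma mulCLM_apply {m n : ℕ} (A : Matrix (Fin m) (Fin n) ℝ) (x : EuclideanSpace ℝ (Fin n)) :
    mulCLM A x = mulVecE A x := rfl

lemma norm_mulCLM {m n : ℕ} (A : Matrix (Fin m) (Fin n) ℝ) : ‖mulCLM A‖ = ‖A‖ := rfl

lemma mulVecE_norm_le {m n : ℕ} (A : Matrix (Fin m) (Fin n) ℝ) (x : EuclideanSpace ℝ (Fin n)) :
    ‖mulVecE A x‖ ≤ ‖A‖ * ‖x‖ := (mulCLM A).le_opNorm x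

lemma mulVecE_mul {m n k : ℕ} (A : Matrix (Fin m) (Fin n) ℝ) (B : Matrix (Fin n) (Fin k) ℝ)
    (x : EuclideanSpace ℝ (Fin k)) : mulVecE (A * B) x = mulVecE A (mulVecE B x) := by
  simp [mulVecE, Matrix.toEuclideanLin_apply, Matrix.mulVec_mulVec]

lemma mulVecE_one {m : ℕ} (x : EuclideanSpace ℝ (Fin m)) : mulVecE (1 : Matrix (Fin m) (Fin m) ℝ) x = x := by
  simp [mulVecE, Matrix.toEuclideanLin_apply]

noncomputable def mulCLMc {m n : ℕ} :
    Matrix (Fin m) (Fin n) ℝ →L[ℝ] (EuclideanSpace ℝ (Fin n) →L[ℝ] EuclideanSpace ℝ (Fin m)) :=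
  LinearMap.toContinuousLinearMap (Matrix.toEuclideanLin.trans LinearMap.toContinuousLinearMap).toLinearMap

lemma mulCLMc_apply {m n : ℕ} (A : Matrix (Fin m) (Fin n) ℝ) : mulCLMc A = mulCLM A := rfl

/-- A posteriori error estimate for unsteady reduced basis models (time-invariant case):
if `‖exp(sA)‖₂ ≤ C₁` on `[0,T]`, `u′ = Au + f`, and `r(t) = A V u_n(t) + f(t) − V u_n′(t)`,
then `‖u(t) − V u_n(t)‖₂ ≤ C₁ (‖u(0) − V u_n(0)‖₂ + ∫₀ᵗ ‖r(τ)‖₂ dτ)` on `[0,T]`. -/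
theorem stmt7 {N n : ℕ}
    (A : Matrix (Fin N) (Fin N) ℝ) (V : Matrix (Fin N) (Fin n) ℝ)
    (T : ℝ) (hT : 0 < T) (C₁ : ℝ) (hC₁ : 0 ≤ C₁)
    (hexp : ∀ s ∈ Set.Icc (0 : ℝ) T, ‖NormedSpace.exp (s • A)‖ ≤ C₁)
    (f : ℝ → EuclideanSpace ℝ (Fin N)) (hf : ContinuousOn f (Set.Icc 0 T))
    (u : ℝ → EuclideanSpace ℝ (Fin N))
    (hu : ∀ t ∈ Set.Icc (0 : ℝ) T, HasDerivAt u (mulVecE A (u t) + f t) t)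
    (un un' : ℝ → EuclideanSpace ℝ (Fin n))
    (hun : ∀ t ∈ Set.Icc (0 : ℝ) T, HasDerivAt un (un' t) t)
    (hun' : ContinuousOn un' (Set.Icc 0 T))
    (r : ℝ → EuclideanSpace ℝ (Fin N))
    (hr : ∀ t : ℝ, r t = mulVecE A (mulVecE V (un t)) + f t - mulVecE V (un' t)) :
    ∀ t ∈ Set.Icc (0 : ℝ) T,
      ‖u t - mulVecE V (un t)‖ ≤
        C₁ * (‖u 0 - mulVecE V (un 0)‖ + ∫ τ in (0 : ℝ)..t, ‖r τ‖) := by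
  intro t ht
  set e : ℝ → EuclideanSpace ℝ (Fin N) := fun τ => u τ - mulVecE V (un τ) with he_def
  -- derivative of e
  have he : ∀ τ ∈ Set.Icc (0 : ℝ) T, HasDerivAt e (mulVecE A (e τ) + r τ) τ := by
    intro τ hτ
    have h1 : HasDerivAt (fun τ => mulVecE V (un τ)) (mulVecE V (un' τ)) τ :=
      (mulCLM V).hasFDerivAt.comp_hasDerivAt τ (hun τ hτ)
    have h2 := (hu τ hτ).sub h1
    convert h2 using 1
    · rfl
    · rfl
    · rfl
    · rfl
    rw [hr]
    have : mulVecE A (u τ) = mulVecE A (e τ) + mulVecE A (mulVecE V (un τ)) := by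
      rw [he_def]
      simp only [mulVecE, map_sub]
      abel
    rw [this]; abel
  -- continuity of un and r on [0,T]
  have hun_cont : ContinuousOn un (Set.Icc 0 T) := fun τ hτ =>
    ((hun τ hτ).continuousAt).continuousWithinAt
  have hr_cont : ContinuousOn r (Set.Icc 0 T) := by
    have : ContinuousOn (fun τ => mulVecE A (mulVecE V (un τ)) + f τ - mulVecE V (un' τ))
        (Set.Icc 0 T) := by
      apply ContinuousOn.sub
      · exact (((mulCLM A).continuous.comp (mulCLM V).continuous).comp_continuousOn
          hun_cont).add hf
      · exact (mulCLM V).continuous.comp_continuousOn hun'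
    exact this.congr fun τ _ => hr τ
  -- matrix-valued function M
  set M : ℝ → Matrix (Fin N) (Fin N) ℝ := fun τ => NormedSpace.exp ((t - τ) • A) with hM_def
  have hM : ∀ τ : ℝ, HasDerivAt M (-(M τ * A)) τ := by
    intro τ
    have h1 : HasDerivAt (fun τ : ℝ => t - τ) (-1) τ := by
      simpa using (hasDerivAt_id τ).const_sub t
    have h2 := (hasDerivAt_exp_smul_const (𝕂 := ℝ) A (t - τ)).scomp τ h1
    simp at h2; exact h2
  have hM_cont : Continuous M :=
    (continuous_iff_continuousAt.2 fun x =>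
      (NormedSpace.exp_analytic (𝕂 := ℝ) x).continuousAt).comp (by fun_prop)
  -- g τ = exp((t-τ)A) e(τ)
  set g : ℝ → EuclideanSpace ℝ (Fin N) := fun τ => mulVecE (M τ) (e τ) with hg_def
  have hg : ∀ τ ∈ Set.Icc (0 : ℝ) T, HasDerivAt g (mulVecE (M τ) (r τ)) τ := by
    intro τ hτ
    have hΦ : HasDerivAt (fun τ => mulCLMc (M τ)) (mulCLMc (-(M τ * A))) τ :=
      mulCLMc.hasFDerivAt.comp_hasDerivAt τ (hM τ)
    have h2 := hΦ.clm_apply (he τ hτ)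
    have heq : mulCLMc (-(M τ * A)) (e τ) + mulCLMc (M τ) (mulVecE A (e τ) + r τ)
        = mulVecE (M τ) (r τ) := by
      simp only [map_neg, ContinuousLinearMap.neg_apply, mulCLMc_apply, mulCLM_apply,
        mulVecE_mul]
      rw [show (mulVecE A (e τ) + r τ : EuclideanSpace ℝ (Fin N))
          = mulVecE A (e τ) + r τ from rfl]
      rw [(show ∀ x y : EuclideanSpace ℝ (Fin N), mulVecE (M τ) (x + y)
          = mulVecE (M τ) x + mulVecE (M τ) y from fun x y => by
        simp [mulVecE, map_add]) (mulVecE A (e τ)) (r τ)]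
      abel
    rw [heq] at h2
    exact h2
  -- the integral identity
  have ht0 : (0 : ℝ) ≤ t := ht.1
  have hsub : Set.uIcc (0 : ℝ) t ⊆ Set.Icc 0 T := by
    rw [Set.uIcc_of_le ht0]
    exact Set.Icc_subset_Icc le_rfl ht.2
  have hg'_cont : ContinuousOn (fun τ => mulVecE (M τ) (r τ)) (Set.Icc 0 t) := by
    have : ContinuousOn (fun τ => mulCLMc (M τ)) (Set.Icc 0 t) :=
      (mulCLMc.continuous.comp hM_cont).continuousOn
    exact this.clm_apply (hr_cont.mono (by rw [← Set.uIcc_of_le ht0]; exact hsub))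
  have hint : IntervalIntegrable (fun τ => mulVecE (M τ) (r τ)) MeasureTheory.volume 0 t := by
    rw [intervalIntegrable_iff_integrableOn_Icc_of_le ht0]
    exact hg'_cont.integrableOn_compact isCompact_Icc
  have key : (∫ τ in (0:ℝ)..t, mulVecE (M τ) (r τ)) = g t - g 0 :=
    intervalIntegral.integral_eq_sub_of_hasDerivAt (fun τ hτ => hg τ (hsub hτ)) hint
  -- evaluate g t and bound
  have hgt : g t = e t := by
    simp only [hg_def, hM_def, sub_self, zero_smul, NormedSpace.exp_zero, mulVecE_one]
  have hg0 : ‖g 0‖ ≤ C₁ * ‖e 0‖ := by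
    calc ‖g 0‖ ≤ ‖M 0‖ * ‖e 0‖ := mulVecE_norm_le _ _
    _ ≤ C₁ * ‖e 0‖ := by
      apply mul_le_mul_of_nonneg_right _ (norm_nonneg _)
      have h := hexp t ht
      simpa [hM_def] using h
  have hbound : ∀ τ ∈ Set.Icc (0:ℝ) t, ‖mulVecE (M τ) (r τ)‖ ≤ C₁ * ‖r τ‖ := by
    intro τ hτ
    calc ‖mulVecE (M τ) (r τ)‖ ≤ ‖M τ‖ * ‖r τ‖ := mulVecE_norm_le _ _
    _ ≤ C₁ * ‖r τ‖ := by
      apply mul_le_mul_of_nonneg_right _ (norm_nonneg _)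
      exact hexp (t - τ) ⟨by linarith [hτ.2], by linarith [hτ.1, ht.2]⟩
  have hintr : IntervalIntegrable (fun τ => ‖r τ‖) MeasureTheory.volume 0 t := by
    rw [intervalIntegrable_iff_integrableOn_Icc_of_le ht0]
    exact ((hr_cont.mono (by rw [← Set.uIcc_of_le ht0]; exact hsub)).norm).integrableOn_compact
      isCompact_Icc
  have hnorm_int : ‖∫ τ in (0:ℝ)..t, mulVecE (M τ) (r τ)‖ ≤ C₁ * ∫ τ in (0:ℝ)..t, ‖r τ‖ := by
    calc ‖∫ τ in (0:ℝ)..t, mulVecE (M τ) (r τ)‖ ≤ ∫ τ in (0:ℝ)..t, ‖mulVecE (M τ) (r τ)‖ :=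
          intervalIntegral.norm_integral_le_integral_norm ht0
    _ ≤ ∫ τ in (0:ℝ)..t, C₁ * ‖r τ‖ := by
          apply intervalIntegral.integral_mono_on ht0 hint.norm (hintr.const_mul C₁)
          exact hbound
    _ = C₁ * ∫ τ in (0:ℝ)..t, ‖r τ‖ := intervalIntegral.integral_const_mul _ _
  have : e t = g 0 + ∫ τ in (0:ℝ)..t, mulVecE (M τ) (r τ) := by
    rw [key, hgt]; abel
  calc ‖e t‖ ≤ ‖g 0‖ + ‖∫ τ in (0:ℝ)..t, mulVecE (M τ) (r τ)‖ := by
        rw [this]; exact norm_add_le _ _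
  _ ≤ C₁ * ‖e 0‖ + C₁ * ∫ τ in (0:ℝ)..t, ‖r τ‖ := add_le_add hg0 hnorm_int
  _ = C₁ * (‖u 0 - mulVecE V (un 0)‖ + ∫ τ in (0:ℝ)..t, ‖r τ‖) := by
    rw [he_def]; ring
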